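/- Let 𝒳 be a finite set, let P^R be a probability distribution on 𝒳, let P^f : 𝒳 → ℝ and g : 𝒳 → ℝ be functions, and let P̂^R : 𝒳 → ℝ satisfy P̂^R(x) > 0 for all x. Let (Ω, μ) be a probability space, X : Ω → 𝒳 a random variable with law P^R, and Y : Ω → ℝ integrable with ∫ Y·1{X = x} dμ = g(x)·P^R(x) for all x ∈ 𝒳. Then ∫ (P^f(X)/P̂^R(X))·(Y − g(X)) dμ = 0. (Key step in the proof of Theorem 2, case 2: when the outcome model is the true conditional mean, the bias-correction term vanishes in expectation for any positive weighting function.) -/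

import Mathlib

open MeasureTheory Finset

/-- **Key step in the proof of Theorem 2, case 2.** When the outcome model is the true
conditional mean, the bias-correction term vanishes in expectation for any positive
weighting function: `∫ (Pf (X ω) / P̂R (X ω)) * (Y ω − g (X ω)) dμ = 0`. -/
theorem bias_correction_vanishes {𝒳 : Type*} [Fintype 𝒳]
    [MeasurableSpace 𝒳] [MeasurableSingletonClass 𝒳]
    (PR : 𝒳 → ℝ)
    (hPR_nonneg : ∀ x, 0 ≤ PR x) (hPR_sum : ∑ x, PR x = 1)
    (Pf g : 𝒳 → ℝ)
    (PRhat : 𝒳 → ℝ) (hPRhat_pos : ∀ x, 0 < PRhat x)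
    {Ω : Type*} [MeasurableSpace Ω] (μ : Measure Ω) [IsProbabilityMeasure μ]
    (X : Ω → 𝒳) (hX : Measurable X)
    (hlaw : ∀ x, (μ {ω | X ω = x}).toReal = PR x)
    (Y : Ω → ℝ) (hY : Integrable Y μ)
    (hcond : ∀ x, ∫ ω in {ω | X ω = x}, Y ω ∂μ = g x * PR x) :
    ∫ ω, (Pf (X ω) / PRhat (X ω)) * (Y ω - g (X ω)) ∂μ = 0 := by
  classical
  set c : 𝒳 → ℝ := fun x => Pf x / PRhat x with hc
  set f : Ω → ℝ := fun ω => c (X ω) * (Y ω - g (X ω)) with hf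
  have hms : ∀ x : 𝒳, MeasurableSet {ω | X ω = x} := fun x => hX (measurableSet_singleton x)
  -- bound on c and c*g
  obtain ⟨C, hC⟩ : ∃ C, ∀ x : 𝒳, |c x| ≤ C ∧ |c x * g x| ≤ C := by
    rcases isEmpty_or_nonempty 𝒳 with h | h
    · exact ⟨0, fun x => (IsEmpty.false x).elim⟩
    · refine ⟨max (univ.sup' univ_nonempty fun x => |c x|)
        (univ.sup' univ_nonempty fun x => |c x * g x|), fun x => ⟨?_, ?_⟩⟩
      · exact le_max_of_le_left (le_sup' (fun x => |c x|) (mem_univ x))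
      · exact le_max_of_le_right (le_sup' (fun x => |c x * g x|) (mem_univ x))
  have hcX : Measurable fun ω => c (X ω) := (measurable_of_countable c).comp hX
  have hcgX : Measurable fun ω => c (X ω) * g (X ω) :=
    (measurable_of_countable fun x => c x * g x).comp hX
  have hint1 : Integrable (fun ω => c (X ω) * Y ω) μ :=
    hY.bdd_mul (c := C) hcX.aestronglyMeasurable (Filter.Eventually.of_forall fun ω => (hC (X ω)).1)
  have hint2 : Integrable (fun ω => c (X ω) * g (X ω)) μ := by
    refine Integrable.mono' (integrable_const C) hcgX.aestronglyMeasurable ?_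
    exact Filter.Eventually.of_forall fun ω => (hC (X ω)).2
  have hfint : Integrable f μ := by
    have : f = fun ω => c (X ω) * Y ω - c (X ω) * g (X ω) := by
      funext ω; simp [hf, mul_sub]
    rw [this]; exact hint1.sub hint2
  -- decompose the integral over fibers
  have hdisj : Pairwise (Function.onFun Disjoint fun x : 𝒳 => {ω | X ω = x}) := by
    intro i j hij
    refine Set.disjoint_left.2 fun ω hi hj => hij ?_
    simp only [Set.mem_setOf_eq] at hi hj
    exact hi.symm.trans hj
  have hunion : (⋃ x : 𝒳, {ω | X ω = x}) = Set.univ := by ext ω; simp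
  have hsplit : ∫ ω, f ω ∂μ = ∑ x : 𝒳, ∫ ω in {ω | X ω = x}, f ω ∂μ := by
    rw [← setIntegral_univ, ← hunion, integral_iUnion hms hdisj hfint.integrableOn,
      tsum_fintype]
  -- each fiber integral vanishes
  have hfiber : ∀ x : 𝒳, ∫ ω in {ω | X ω = x}, f ω ∂μ = 0 := by
    intro x
    have hcongr : ∫ ω in {ω | X ω = x}, f ω ∂μ
        = ∫ ω in {ω | X ω = x}, c x * (Y ω - g x) ∂μ := by
      refine setIntegral_congr_fun (hms x) fun ω hω => ?_
      simp only [Set.mem_setOf_eq] at hω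
      simp [hf, hω]
    rw [hcongr, integral_const_mul]
    have hYsub : ∫ ω in {ω | X ω = x}, (Y ω - g x) ∂μ
        = (∫ ω in {ω | X ω = x}, Y ω ∂μ) - (∫ _ in {ω | X ω = x}, g x ∂μ) :=
      integral_sub hY.restrict (integrable_const _)
    rw [hYsub, hcond x, setIntegral_const, measureReal_def, hlaw x, smul_eq_mul, mul_comm (PR x) (g x),
      sub_self, mul_zero]
  rw [show (∫ ω, (Pf (X ω) / PRhat (X ω)) * (Y ω - g (X ω)) ∂μ) = ∫ ω, f ω ∂μ from rfl,
    hsplit]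
  exact Finset.sum_eq_zero fun x _ => hfiber x
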